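/- arXiv:2511.20204 — 2 statements merged into one kernel-verified Lean document; each statement's English description precedes it below -/
import Mathlib

section
/- Let R be a commutative ring and Q a finite acyclic quiver. If P and P' are projective RQ-modules (representations of Q by R-modules), then their vertexwise tensor product P ⊠ P', defined by (P ⊠ P')_i = P_i ⊗_R P'_i and (P ⊠ P')_α = P_α ⊗ P'_α, is again a projective RQ-module. -/
open CategoryTheory

variable (R : Type) [CommRing R] (V : Type) [Quiver.{0} V]

/-- A representation of the quiver `V` over the commutative ring `R`
(equivalently, a module over the path algebra `RV`): an `R`-module at each
vertex and an `R`-linear map for each arrow. -/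
structure QuivRep : Type 1 where
  M : V → Type
  [isAddCommGroup : ∀ v, AddCommGroup (M v)]
  [isModule : ∀ v, Module R (M v)]
  map : ∀ {i j : V}, (i ⟶ j) → (M i →ₗ[R] M j)

attribute [instance] QuivRep.isAddCommGroup QuivRep.isModule

namespace QuivRep
variable {R V}

/-- Morphisms of quiver representations. -/
@[ext]
structure Hom (X Y : QuivRep R V) : Type where
  app : ∀ v, X.M v →ₗ[R] Y.M v
  comm : ∀ {i j : V} (a : i ⟶ j), (app j).comp (X.map a) = (Y.map a).comp (app i)

instance : Category.{0} (QuivRep R V) where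
  Hom X Y := Hom X Y
  id X := ⟨fun _ => LinearMap.id, fun a => by rw [LinearMap.id_comp, LinearMap.comp_id]⟩
  comp f g := ⟨fun v => (g.app v).comp (f.app v), fun a => by
    rw [LinearMap.comp_assoc, f.comm a, ← LinearMap.comp_assoc, g.comm a, LinearMap.comp_assoc]⟩
  id_comp f := by apply Hom.ext; funext v; exact LinearMap.comp_id _
  comp_id f := by apply Hom.ext; funext v; exact LinearMap.id_comp _
  assoc f g h := by apply Hom.ext; funext v; rfl

variable (R V)

/-- The vertexwise tensor product `X ⊠ Y` of two representations. -/
noncomputable def tensor (X Y : QuivRep R V) : QuivRep R V where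
  M v := TensorProduct R (X.M v) (Y.M v)
  map a := TensorProduct.map (X.map a) (Y.map a)

/-- The unit representation `U`: the module `R` at every vertex and the
identity map on every arrow. -/
def unit : QuivRep R V where
  M _ := R
  map _ := LinearMap.id

/-- The representation `i_× M` with the module `M` at the vertex `i` and `0`
at all other vertices (all arrow maps are zero).  Here the component at `v`
is realized as `PLift (v = i) →₀ M`, which is `M` if `v = i` and `0`
otherwise.  In particular `vertexRep R V i R` is the representation `U(i)`. -/
noncomputable def vertexRep (i : V) (M : Type) [AddCommGroup M] [Module R M] : QuivRep R V where
  M v := PLift (v = i) →₀ M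
  map _ := 0

/-- The projective representation `P(i)`: at a vertex `k` it is the free
`R`-module on the set of paths from `i` to `k`, and arrows act by
path composition. -/
noncomputable def proj (i : V) : QuivRep R V where
  M k := Quiver.Path i k →₀ R
  map a := Finsupp.lmapDomain R R (fun p => p.cons a)

/-- The indexing type of arrows with target `i`. -/
def In (i : V) : Type := Σ j : V, j ⟶ i

/-- The canonical map `⊕_{α : j → i} P_j → P_i` induced by the structure maps. -/
noncomputable def incoming (P : QuivRep R V) (i : V) :
    (DirectSum (In V i) (fun σ => P.M σ.1)) →ₗ[R] P.M i := by
  classical exact DirectSum.toModule R _ _ (fun σ => P.map σ.2)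

/-- The quiver `V` is acyclic: the only path from a vertex to itself is trivial. -/
def Acyclic : Prop := ∀ (i : V) (p : Quiver.Path i i), p = Quiver.Path.nil

end QuivRep

open QuivRep

namespace QuivRepAux
open Quiver
variable {R : Type} [CommRing R] {V : Type} [Quiver.{0} V]

@[simp] lemma comp_app {X Y Z : QuivRep R V} (f : X ⟶ Y) (g : Y ⟶ Z) (v : V) :
    Hom.app (f ≫ g) v = (Hom.app g v).comp (Hom.app f v) := rfl

@[simp] lemma id_app (X : QuivRep R V) (v : V) :
    Hom.app (𝟙 X) v = LinearMap.id := rfl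

/-- Action of a path. -/
noncomputable def pathMap (P : QuivRep R V) : ∀ {i k : V}, Path i k → (P.M i →ₗ[R] P.M k)
  | _, _, Path.nil => LinearMap.id
  | _, _, Path.cons p a => (P.map a).comp (pathMap P p)

@[simp] lemma pathMap_nil (P : QuivRep R V) {i : V} :
    pathMap P (Path.nil : Path i i) = LinearMap.id := by simp [pathMap]

@[simp] lemma pathMap_cons (P : QuivRep R V) {i j k : V} (p : Path i j) (a : j ⟶ k) :
    pathMap P (p.cons a) = (P.map a).comp (pathMap P p) := by simp [pathMap]

lemma pathMap_comp (P : QuivRep R V) {i j k : V} (p : Path i j) (q : Path j k) :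
    pathMap P (p.comp q) = (pathMap P q).comp (pathMap P p) := by
  induction q with
  | nil => simp [LinearMap.id_comp]
  | cons q a ih => simp [Path.comp_cons, ih, LinearMap.comp_assoc]

lemma pathMap_natural {X Y : QuivRep R V} (f : X ⟶ Y) {i k : V} (p : Path i k) :
    (Hom.app f k).comp (pathMap X p) = (pathMap Y p).comp (Hom.app f i) := by
  induction p with
  | nil => simp [LinearMap.id_comp, LinearMap.comp_id]
  | cons p a ih =>
      simp only [pathMap_cons, ← LinearMap.comp_assoc, Hom.comm f a]
      rw [LinearMap.comp_assoc, ih, LinearMap.comp_assoc]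

/-- Epimorphisms are vertexwise surjective. -/
lemma epi_surjective {X Y : QuivRep R V} (e : X ⟶ Y) [Epi e] (k : V) :
    Function.Surjective (Hom.app e k) := by
  classical
  let C : QuivRep R V :=
    { M := fun v => Y.M v ⧸ LinearMap.range (Hom.app e v)
      map := fun {i j} a => Submodule.mapQ _ _ (Y.map a) (by
        rintro _ ⟨x, rfl⟩
        exact ⟨X.map a x, by
          have := congrArg (fun (g : X.M i →ₗ[R] Y.M j) => g x) (Hom.comm e a)
          simpa using this⟩) }
  let π : Y ⟶ C :=
    { app := fun v => Submodule.mkQ _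
      comm := fun {i j} a => by
        ext y
        simp [C, Submodule.mapQ_apply] }
  let z : Y ⟶ C :=
    { app := fun v => 0
      comm := fun {i j} a => by ext y; simp }
  have h : e ≫ π = e ≫ z := by
    apply Hom.ext; funext v; ext x
    simp [π, z, Submodule.Quotient.mk_eq_zero]
    exact (Submodule.Quotient.mk_eq_zero _).mpr ⟨x, rfl⟩
  have hπ : π = z := (cancel_epi e).mp h
  intro y
  have : Submodule.mkQ (LinearMap.range (Hom.app e k)) y = 0 := by
    have := congrArg (fun (g : QuivRep.Hom Y C) => Hom.app g k y) hπ
    simp [π, z] at this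
    exact this
  simpa [Submodule.Quotient.mk_eq_zero] using this

/-- Vertexwise surjective morphisms are epi. -/
lemma epi_of_surjective {X Y : QuivRep R V} (e : X ⟶ Y)
    (h : ∀ k, Function.Surjective (Hom.app e k)) : Epi e := by
  constructor
  intro Z g₁ g₂ hgh
  apply Hom.ext; funext v; ext y
  obtain ⟨x, rfl⟩ := h v y
  have := congrArg (fun (g : QuivRep.Hom X Z) => Hom.app g v x) hgh
  simpa using this

/-- Generators of the free cover of `P`. -/
def FGen (P : QuivRep R V) (k : V) : Type := Σ i : V, Path i k × P.M i

def fpush (P : QuivRep R V) {k k' : V} (a : k ⟶ k') (g : FGen P k) : FGen P k' :=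
  ⟨g.1, g.2.1.cons a, g.2.2⟩

/-- The free cover of `P`. -/
noncomputable def F (P : QuivRep R V) : QuivRep R V where
  M k := FGen P k →₀ R
  map a := Finsupp.lmapDomain R R (fpush P a)

@[simp] lemma F_map_single (P : QuivRep R V) {k k' : V} (a : k ⟶ k') (g : FGen P k) :
    (F P).map a (Finsupp.single g 1) = Finsupp.single (fpush P a g) 1 := by
  show Finsupp.lmapDomain R R (fpush P a) (Finsupp.single g 1) = _
  simp [F, Finsupp.lmapDomain_apply, Finsupp.mapDomain_single]

/-- The counit `F P ⟶ P`. -/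
noncomputable def eps (P : QuivRep R V) : F P ⟶ P where
  app k := Finsupp.lift (P.M k) R (FGen P k) (fun g => pathMap P g.2.1 g.2.2)
  comm {i j} a := by
    apply Finsupp.lhom_ext
    intro g b
    show Finsupp.lift (P.M j) R (FGen P j) (fun g => pathMap P g.2.1 g.2.2)
        (Finsupp.lmapDomain R R (fpush P a) (Finsupp.single g b))
      = P.map a (Finsupp.lift (P.M i) R (FGen P i) (fun g => pathMap P g.2.1 g.2.2) (Finsupp.single g b))
    simp [F, Finsupp.lmapDomain_apply, Finsupp.mapDomain_single, fpush,
      Finsupp.lift_apply, Finsupp.sum_single_index]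
    erw [Finsupp.sum_single_index (by simp)]
    show b • pathMap P (g.snd.1.cons a) g.snd.2 = _
    rw [pathMap_cons]
    rfl

lemma eps_surjective (P : QuivRep R V) (k : V) :
    Function.Surjective (Hom.app (eps P) k) := by
  intro y
  refine ⟨Finsupp.single ⟨k, Path.nil, y⟩ 1, ?_⟩
  show Finsupp.lift (P.M k) R (FGen P k) (fun g => pathMap P g.2.1 g.2.2) _ = y
  rw [Finsupp.lift_apply]
  erw [Finsupp.sum_single_index] <;> simp [pathMap]

/-- Functoriality of tensor. -/
noncomputable def tensorHom {A B A' B' : QuivRep R V} (f : A ⟶ B) (f' : A' ⟶ B') :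
    tensor R V A A' ⟶ tensor R V B B' where
  app v := TensorProduct.map (Hom.app f v) (Hom.app f' v)
  comm {i j} a := by
    simp only [tensor, ← TensorProduct.map_comp, Hom.comm f a, Hom.comm f' a]
    erw [← TensorProduct.map_comp, ← TensorProduct.map_comp, Hom.comm f a, Hom.comm f' a]

lemma tensorHom_comp {A B C A' B' C' : QuivRep R V}
    (f : A ⟶ B) (g : B ⟶ C) (f' : A' ⟶ B') (g' : B' ⟶ C') :
    tensorHom (f ≫ g) (f' ≫ g') = tensorHom f f' ≫ tensorHom g g' := by
  apply Hom.ext; funext v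
  simp [tensorHom, TensorProduct.map_comp]
  rfl

lemma tensorHom_id (A A' : QuivRep R V) :
    tensorHom (𝟙 A) (𝟙 A') = 𝟙 (tensor R V A A') := by
  apply Hom.ext; funext v
  show TensorProduct.map _ _ = LinearMap.id
  rw [id_app, id_app, TensorProduct.map_id]


variable {P P' : QuivRep R V}

def castTgt {j y x : V} (h : y = x) (q : Path j y) : Path j x := h ▸ q

@[simp] lemma castTgt_rfl {j y : V} (h : y = y) (q : Path j y) : castTgt h q = q := rfl

open scoped Classical in
/-- Strip the longest common suffix of two paths with a common target. -/
noncomputable def dec : ∀ {i j k : V}, Path i k → Path j k →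
    Σ v : V, (Path i v × Path j v) × Path v k
  | _, _, k, Path.nil, q => ⟨k, (Path.nil, q), Path.nil⟩
  | _, _, k, Path.cons p a, Path.nil => ⟨k, (p.cons a, Path.nil), Path.nil⟩
  | _, _, k, Path.cons (b := x) p a, Path.cons (b := y) q b =>
    if h : (⟨x, a⟩ : Σ v : V, v ⟶ k) = ⟨y, b⟩ then
      have hxy : x = y := congrArg Sigma.fst h
      let d := dec p (castTgt hxy.symm q)
      ⟨d.1, d.2.1, d.2.2.cons a⟩
    else ⟨k, (p.cons a, q.cons b), Path.nil⟩

lemma dec_cons_cons {i j x k : V} (p : Path i x) (q : Path j x) (a : x ⟶ k) :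
    dec (p.cons a) (q.cons a) = ⟨(dec p q).1, (dec p q).2.1, (dec p q).2.2.cons a⟩ := by
  rw [dec, dif_pos rfl]
  rfl

lemma dec_spec {i k : V} (p : Path i k) : ∀ {j : V} (q : Path j k),
    ((dec p q).2.1.1.comp (dec p q).2.2 = p) ∧ ((dec p q).2.1.2.comp (dec p q).2.2 = q) := by
  induction p with
  | nil => intro j q; rw [dec]; exact ⟨rfl, rfl⟩
  | cons p a ih =>
      intro j q
      cases q with
      | nil => rw [dec]; exact ⟨rfl, rfl⟩
      | cons q b =>
          rename_i y
          by_cases h : (⟨_, a⟩ : Σ v : V, v ⟶ _) = ⟨y, b⟩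
          · injection h with h1 h2
            subst h1
            obtain rfl := eq_of_heq h2
            rw [dec_cons_cons]
            obtain ⟨e1, e2⟩ := ih q
            exact ⟨by simp [Path.comp_cons, e1], by simp [Path.comp_cons, e2]⟩
          · rw [dec, dif_neg h]
            exact ⟨rfl, rfl⟩

/-- Index of generators of the representation `H`. -/
def Idx (P P' : QuivRep R V) (k : V) : Type := FGen P k × FGen P' k

def ipush (a : k ⟶ k') (g : Idx P P' k) : Idx P P' k' :=
  (fpush P a g.1, fpush P' a g.2)

def ipushPath : ∀ {k k' : V}, Path k k' → Idx P P' k → Idx P P' k'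
  | _, _, Path.nil, g => g
  | _, _, Path.cons r a, g => ipush a (ipushPath r g)

/-- The decomposition data of a generator: the core vertex, the core generator,
and the common suffix. -/
noncomputable def hdata (g : Idx P P' k) : Σ v : V, Idx P P' v × Path v k :=
  ⟨(dec g.1.2.1 g.2.2.1).1,
    (⟨g.1.1, (dec g.1.2.1 g.2.2.1).2.1.1, g.1.2.2⟩,
     ⟨g.2.1, (dec g.1.2.1 g.2.2.1).2.1.2, g.2.2.2⟩),
    (dec g.1.2.1 g.2.2.1).2.2⟩

lemma hdata_push {k k' : V} (a : k ⟶ k') (g : Idx P P' k) :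
    hdata (ipush a g) = ⟨(hdata g).1, (hdata g).2.1, (hdata g).2.2.cons a⟩ := by
  obtain ⟨⟨i, p, x⟩, ⟨j, q, y⟩⟩ := g
  show hdata (⟨i, p.cons a, x⟩, ⟨j, q.cons a, y⟩) = _
  unfold hdata
  rw [dec_cons_cons]

lemma ipushPath_apply {v k : V} (r : Path v k) {i' j' : V} (p' : Path i' v) (q' : Path j' v)
    (x' : P.M i') (y' : P'.M j') :
    ipushPath r ((⟨i', p', x'⟩, ⟨j', q', y'⟩) : Idx P P' v)
      = (⟨i', p'.comp r, x'⟩, ⟨j', q'.comp r, y'⟩) := by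
  induction r with
  | nil => erw [ipushPath.eq_1]; simp; rfl
  | cons r a ih =>
      erw [ipushPath.eq_2, ih]
      simp [ipush, fpush, Path.comp_cons]
      rfl

lemma hdata_recon {k : V} (g : Idx P P' k) :
    ipushPath (hdata g).2.2 (hdata g).2.1 = g := by
  obtain ⟨⟨i, p, x⟩, ⟨j, q, y⟩⟩ := g
  obtain ⟨e1, e2⟩ := dec_spec p q
  show ipushPath (dec p q).2.2 (⟨i, (dec p q).2.1.1, x⟩, ⟨j, (dec p q).2.1.2, y⟩) = _
  rw [ipushPath_apply, e1, e2]

/-- The free representation on pairs of paths with common target. -/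
noncomputable def H (P P' : QuivRep R V) : QuivRep R V where
  M k := Idx P P' k →₀ R
  map a := Finsupp.lmapDomain R R (ipush a)

lemma H_pathMap_single {v k : V} (r : Path v k) (c : Idx P P' v) :
    pathMap (H P P') r (Finsupp.single c 1) = Finsupp.single (ipushPath r c) 1 := by
  induction r with
  | nil => rw [pathMap_nil, ipushPath.eq_1]; rfl
  | cons r a ih =>
      rw [pathMap_cons]
      show (H P P').map a (pathMap (H P P') r (Finsupp.single c 1)) = _
      rw [ih]
      show Finsupp.lmapDomain R R (ipush a) _ = _
      rw [Finsupp.lmapDomain_apply, Finsupp.mapDomain_single, ipushPath]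

/-- `H P P'` is projective. -/
lemma H_projective (P P' : QuivRep R V) : Projective (H P P') := by
  classical
  constructor
  intro E X f e he
  have hsurj : ∀ v, Function.Surjective (Hom.app e v) := epi_surjective e
  let sec : ∀ v, X.M v → E.M v := fun v y => Classical.choose (hsurj v y)
  have hsec : ∀ v y, Hom.app e v (sec v y) = y := fun v y => Classical.choose_spec (hsurj v y)
  let val : ∀ k, Idx P P' k → E.M k := fun k g =>
    pathMap E (hdata g).2.2 (sec (hdata g).1 (Hom.app f (hdata g).1 (Finsupp.single (hdata g).2.1 1)))
  have val_push : ∀ {k k' : V} (a : k ⟶ k') (g : Idx P P' k),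
      val k' (ipush a g) = E.map a (val k g) := by
    intro k k' a g
    show pathMap E (hdata (ipush a g)).2.2 (sec (hdata (ipush a g)).1
        (Hom.app f (hdata (ipush a g)).1 (Finsupp.single (hdata (ipush a g)).2.1 1))) = _
    rw [hdata_push]
    show pathMap E ((hdata g).2.2.cons a) _ = _
    rw [pathMap_cons]
    rfl
  let ell : H P P' ⟶ E :=
    { app := fun k => Finsupp.lift (E.M k) R (Idx P P' k) (val k)
      comm := by
        intro i j a
        apply Finsupp.lhom_ext
        intro g b
        show Finsupp.lift (E.M j) R (Idx P P' j) (val j)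
            (Finsupp.lmapDomain R R (ipush a) (Finsupp.single g b))
          = E.map a (Finsupp.lift (E.M i) R (Idx P P' i) (val i) (Finsupp.single g b))
        rw [Finsupp.lmapDomain_apply, Finsupp.mapDomain_single,
          Finsupp.lift_apply, Finsupp.lift_apply, Finsupp.sum_single_index (by simp),
          Finsupp.sum_single_index (by simp), map_smul, val_push] }
  refine ⟨ell, ?_⟩
  apply Hom.ext; funext k
  apply Finsupp.lhom_ext
  intro g b
  show Hom.app e k (Finsupp.lift (E.M k) R (Idx P P' k) (val k) (Finsupp.single g b)) = _
  rw [Finsupp.lift_apply, Finsupp.sum_single_index (by simp), map_smul]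
  have h1 : Hom.app e k (val k g)
      = pathMap X (hdata g).2.2 (Hom.app e (hdata g).1
          (sec (hdata g).1 (Hom.app f (hdata g).1 (Finsupp.single (hdata g).2.1 1)))) := by
    have := congrArg (fun (L : E.M (hdata g).1 →ₗ[R] X.M k) =>
      L (sec (hdata g).1 (Hom.app f (hdata g).1 (Finsupp.single (hdata g).2.1 1))))
      (pathMap_natural e (hdata g).2.2)
    simpa [val] using this
  rw [h1, hsec]
  have h2 : pathMap X (hdata g).2.2 (Hom.app f (hdata g).1 (Finsupp.single (hdata g).2.1 1))
      = Hom.app f k (pathMap (H P P') (hdata g).2.2 (Finsupp.single (hdata g).2.1 1)) := by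
    have := congrArg (fun (L : (H P P').M (hdata g).1 →ₗ[R] X.M k) =>
      L (Finsupp.single (hdata g).2.1 1)) (pathMap_natural f (hdata g).2.2)
    exact this.symm
  rw [h2, H_pathMap_single, hdata_recon]
  erw [← map_smul]
  erw [Finsupp.smul_single, smul_eq_mul, mul_one]
  rfl

/-- Comparison `tensor (F P) (F P') ⟶ H P P'`. -/
noncomputable def tau (P P' : QuivRep R V) : tensor R V (F P) (F P') ⟶ H P P' where
  app k := (finsuppTensorFinsupp' R (FGen P k) (FGen P' k)).toLinearMap
  comm := by
    intro i j a
    apply TensorProduct.ext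
    apply Finsupp.lhom_ext; intro g r
    apply Finsupp.lhom_ext; intro g' r'
    show finsuppTensorFinsupp' R (FGen P j) (FGen P' j)
        (TensorProduct.map (Finsupp.lmapDomain R R (fpush P a)) (Finsupp.lmapDomain R R (fpush P' a))
          (Finsupp.single g r ⊗ₜ[R] Finsupp.single g' r'))
      = Finsupp.lmapDomain R R (ipush a)
          (finsuppTensorFinsupp' R (FGen P i) (FGen P' i) (Finsupp.single g r ⊗ₜ[R] Finsupp.single g' r'))
    erw [TensorProduct.map_tmul, Finsupp.lmapDomain_apply, Finsupp.lmapDomain_apply,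
      Finsupp.mapDomain_single, Finsupp.mapDomain_single,
      finsuppTensorFinsupp'_single_tmul_single, finsuppTensorFinsupp'_single_tmul_single,
      Finsupp.lmapDomain_apply, Finsupp.mapDomain_single]
    rfl

/-- Retraction `H P P' ⟶ tensor P P'`. -/
noncomputable def rho (P P' : QuivRep R V) : H P P' ⟶ tensor R V P P' where
  app k := Finsupp.lift ((tensor R V P P').M k) R (Idx P P' k)
    (fun g => pathMap P g.1.2.1 g.1.2.2 ⊗ₜ[R] pathMap P' g.2.2.1 g.2.2.2)
  comm := by
    intro i j a
    apply Finsupp.lhom_ext; intro g b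
    show Finsupp.lift ((tensor R V P P').M j) R (Idx P P' j)
        (fun g => pathMap P g.1.2.1 g.1.2.2 ⊗ₜ[R] pathMap P' g.2.2.1 g.2.2.2)
        (Finsupp.lmapDomain R R (ipush a) (Finsupp.single g b))
      = TensorProduct.map (P.map a) (P'.map a)
          (Finsupp.lift ((tensor R V P P').M i) R (Idx P P' i)
            (fun g => pathMap P g.1.2.1 g.1.2.2 ⊗ₜ[R] pathMap P' g.2.2.1 g.2.2.2)
            (Finsupp.single g b))
    erw [Finsupp.lmapDomain_apply, Finsupp.mapDomain_single, Finsupp.lift_apply,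
      Finsupp.lift_apply, Finsupp.sum_single_index (by exact zero_smul _ _),
      Finsupp.sum_single_index (by exact zero_smul _ _),
      map_smul]
    obtain ⟨⟨i1, p, x⟩, ⟨j1, q, y⟩⟩ := g
    show b • (pathMap P (p.cons a) x ⊗ₜ[R] pathMap P' (q.cons a) y) = _
    rw [pathMap_cons, pathMap_cons, TensorProduct.map_tmul]
    rfl

lemma tau_rho (P P' : QuivRep R V) :
    tau P P' ≫ rho P P' = tensorHom (eps P) (eps P') := by
  apply Hom.ext; funext k
  apply TensorProduct.ext
  apply Finsupp.lhom_ext; intro g r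
  apply Finsupp.lhom_ext; intro g' r'
  simp only [LinearMap.compr₂_apply, TensorProduct.mk_apply, comp_app, LinearMap.comp_apply]
  show Hom.app (rho P P') k (finsuppTensorFinsupp' R (FGen P k) (FGen P' k)
      (Finsupp.single g r ⊗ₜ[R] Finsupp.single g' r'))
    = TensorProduct.map (Hom.app (eps P) k) (Hom.app (eps P') k)
        (Finsupp.single g r ⊗ₜ[R] Finsupp.single g' r')
  erw [finsuppTensorFinsupp'_single_tmul_single, TensorProduct.map_tmul]
  show Finsupp.lift ((tensor R V P P').M k) R (Idx P P' k)
      (fun g => pathMap P g.1.2.1 g.1.2.2 ⊗ₜ[R] pathMap P' g.2.2.1 g.2.2.2)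
      (Finsupp.single (g, g') (r * r'))
    = Finsupp.lift (P.M k) R (FGen P k) (fun g => pathMap P g.2.1 g.2.2) (Finsupp.single g r)
      ⊗ₜ[R] Finsupp.lift (P'.M k) R (FGen P' k) (fun g => pathMap P' g.2.1 g.2.2)
        (Finsupp.single g' r')
  erw [Finsupp.lift_apply, Finsupp.lift_apply, Finsupp.lift_apply,
    Finsupp.sum_single_index (by exact zero_smul _ _), Finsupp.sum_single_index (by simp),
    Finsupp.sum_single_index (by simp)]
  rw [TensorProduct.smul_tmul_smul]
  rfl

end QuivRepAux

open QuivRepAux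

/-- Over a commutative ring `R` and a finite acyclic quiver,
the vertexwise tensor product of two projective representations is again
projective. -/
theorem tensor_projective
    [Fintype V] [∀ i j : V, Fintype (i ⟶ j)] (hQ : Acyclic V)
    (P P' : QuivRep R V) (hP : Projective P) (hP' : Projective P') :
    Projective (tensor R V P P') := by
  classical
  haveI : Epi (eps P) := epi_of_surjective _ (eps_surjective P)
  haveI : Epi (eps P') := epi_of_surjective _ (eps_surjective P')
  haveI := hP; haveI := hP'
  obtain ⟨s, hs⟩ := Projective.factors (𝟙 P) (eps P)
  obtain ⟨s', hs'⟩ := Projective.factors (𝟙 P') (eps P')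
  constructor
  intro E X f e he
  obtain ⟨h, hh⟩ := (H_projective P P').factors (rho P P' ≫ f) e
  refine ⟨(tensorHom s s' ≫ tau P P') ≫ h, ?_⟩
  rw [Category.assoc, hh]
  calc (tensorHom s s' ≫ tau P P') ≫ rho P P' ≫ f
      = tensorHom s s' ≫ (tau P P' ≫ rho P P') ≫ f := by simp only [Category.assoc]
    _ = tensorHom s s' ≫ tensorHom (eps P) (eps P') ≫ f := by rw [tau_rho]
    _ = (tensorHom (s ≫ eps P) (s' ≫ eps P')) ≫ f := by
        rw [tensorHom_comp, Category.assoc]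
    _ = f := by rw [hs, hs', tensorHom_id, Category.id_comp]
end

section
/- Let Q be a finite acyclic quiver with at least two vertices that is connected, let R be a nonzero commutative ring, and let s be a source of Q. Let U(s) be the representation with U(s)_s = R and U(s)_k = 0 for k ≠ s, and let U be the unit representation (R at every vertex, identity on arrows). Then U(s) ⊠ U(s) ≅ U(s) while there is no isomorphism making U(s) rigid: concretely, Hom_{RQ}(U(s) ⊠ P(i), U) = 0 for every vertex i with i ≠ s, and U(s) ⊠ P(i) = 0 for i ≠ s, so the internal hom [U(s), U] vanishes although [U(s), U(s)] ≅ U(s) ≠ 0. -/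
open CategoryTheory

variable (R : Type) [CommRing R] (V : Type) [Quiver.{0} V]

open QuivRep

section Aux

variable {R : Type} [CommRing R] {V : Type} [Quiver.{0} V]

theorem finsupp_subsingleton_of_isEmpty {α : Type} [IsEmpty α] :
    Subsingleton (α →₀ R) :=
  ⟨fun f g => Finsupp.ext fun a => isEmptyElim a⟩

theorem tensor_eq_zero_left {M N : Type} [AddCommGroup M] [Module R M]
    [AddCommGroup N] [Module R N] [Subsingleton M] (z : TensorProduct R M N) : z = 0 := by
  induction z using TensorProduct.induction_on with
  | zero => rfl
  | tmul m n => rw [Subsingleton.elim m (0 : M), TensorProduct.zero_tmul]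
  | add a b ha hb => rw [ha, hb, add_zero]

theorem tensor_subsingleton_left {M N : Type} [AddCommGroup M] [Module R M]
    [AddCommGroup N] [Module R N] [Subsingleton M] :
    Subsingleton (TensorProduct R M N) :=
  ⟨fun x y => (tensor_eq_zero_left x).trans (tensor_eq_zero_left y).symm⟩

theorem tensor_eq_zero_right {M N : Type} [AddCommGroup M] [Module R M]
    [AddCommGroup N] [Module R N] [Subsingleton N] (z : TensorProduct R M N) : z = 0 := by
  induction z using TensorProduct.induction_on with
  | zero => rfl
  | tmul m n => rw [Subsingleton.elim n (0 : N), TensorProduct.tmul_zero]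
  | add a b ha hb => rw [ha, hb, add_zero]

theorem tensor_subsingleton_right {M N : Type} [AddCommGroup M] [Module R M]
    [AddCommGroup N] [Module R N] [Subsingleton N] :
    Subsingleton (TensorProduct R M N) :=
  ⟨fun x y => (tensor_eq_zero_right x).trans (tensor_eq_zero_right y).symm⟩

theorem comp_tmap_zero_left {M M' N N' P : Type}
    [AddCommGroup M] [Module R M] [AddCommGroup M'] [Module R M']
    [AddCommGroup N] [Module R N] [AddCommGroup N'] [Module R N']
    [AddCommGroup P] [Module R P]
    (g : N →ₗ[R] N') (h : TensorProduct R M' N' →ₗ[R] P) :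
    h.comp (TensorProduct.map (0 : M →ₗ[R] M') g) = 0 :=
  TensorProduct.ext' fun x y => by
    simp [TensorProduct.map_tmul, TensorProduct.zero_tmul]

theorem hom_eq_of_subsingleton {M N : Type} [AddCommGroup M] [Module R M]
    [AddCommGroup N] [Module R N] [Subsingleton M] (f g : M →ₗ[R] N) : f = g :=
  LinearMap.ext fun x => by rw [Subsingleton.elim x 0, map_zero, map_zero]

theorem path_to_source_isEmpty {s : V} (hs : ∀ j : V, IsEmpty (j ⟶ s))
    {i : V} (hi : i ≠ s) : IsEmpty (Quiver.Path i s) := by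
  constructor
  intro p
  cases p with
  | nil => exact hi rfl
  | cons q a => exact (hs _).false a

theorem exists_arrow_out_of_path {s t : V} (hs : ∀ j : V, IsEmpty (j ⟶ s))
    (p : @Quiver.Path (Quiver.Symmetrify V) _ s t) :
    t ≠ s → ∃ j : V, Nonempty (s ⟶ j) := by
  induction p with
  | nil => exact fun ht => absurd rfl ht
  | @cons c t' q a ih =>
    intro _
    by_cases hc : c = s
    · subst hc
      rcases a with a | a
      · exact ⟨_, ⟨a⟩⟩
      · exact ((hs _).false a).elim
    · exact ih hc

end Aux

/-- Let `Q` be a connected finite acyclic quiver with at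
least two vertices over a nonzero commutative ring `R`, and let `s` be a
source.  Then `U(s) ⊠ U(s) ≅ U(s)`, but `U(s)` is not rigid: the
vertexwise components `Hom(U(s) ⊠ P(i), U)` of the internal hom
`[U(s), U]` all vanish (indeed `U(s) ⊠ P(i) = 0` for `i ≠ s`), while
`[U(s), U(s)]` is nonzero since `Hom(U(s) ⊠ P(s), U(s)) ≠ 0`. -/
theorem source_simple_not_rigid
    [Nontrivial R] [Fintype V] [∀ i j : V, Fintype (i ⟶ j)]
    (hacy : Acyclic V)
    (hconn : ∀ i j : Quiver.Symmetrify V, Nonempty (Quiver.Path i j))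
    (hcard : 2 ≤ Fintype.card V)
    (s : V) (hs : ∀ j : V, IsEmpty (j ⟶ s)) :
    Nonempty (tensor R V (vertexRep R V s R) (vertexRep R V s R) ≅ vertexRep R V s R) ∧
    (∀ i : V, i ≠ s → ∀ v : V,
      Subsingleton ((tensor R V (vertexRep R V s R) (proj R V i)).M v)) ∧
    (∀ i : V,
      Subsingleton (tensor R V (vertexRep R V s R) (proj R V i) ⟶ unit R V)) ∧
    ¬ Subsingleton (tensor R V (vertexRep R V s R) (proj R V s) ⟶ vertexRep R V s R) := by
  have e : ∀ v : V,
      TensorProduct R (PLift (v = s) →₀ R) (PLift (v = s) →₀ R) ≃ₗ[R] (PLift (v = s) →₀ R) := by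
    intro v
    by_cases h : v = s
    · haveI : Unique (PLift (v = s)) := uniqueOfSubsingleton ⟨h⟩
      exact (TensorProduct.congr (Finsupp.LinearEquiv.finsuppUnique R R (PLift (v = s)))
        (Finsupp.LinearEquiv.finsuppUnique R R (PLift (v = s)))).trans
        ((TensorProduct.lid R R).trans
          (Finsupp.LinearEquiv.finsuppUnique R R (PLift (v = s))).symm)
    · haveI : IsEmpty (PLift (v = s)) := ⟨fun p => h p.down⟩
      haveI : Subsingleton (PLift (v = s) →₀ R) := finsupp_subsingleton_of_isEmpty
      haveI : Subsingleton (TensorProduct R (PLift (v = s) →₀ R) (PLift (v = s) →₀ R)) :=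
        tensor_subsingleton_left
      exact LinearEquiv.ofSubsingleton _ _
  refine ⟨?_, ?_, ?_, ?_⟩
  · -- the iso `U(s) ⊠ U(s) ≅ U(s)`
    refine ⟨{ hom := ⟨fun v => (e v).toLinearMap, ?_⟩,
              inv := ⟨fun v => (e v).symm.toLinearMap, ?_⟩,
              hom_inv_id := ?_, inv_hom_id := ?_ }⟩
    · intro i j a
      apply TensorProduct.ext'
      intro x y
      simp [tensor, vertexRep]
      exact LinearMap.map_zero (e j).toLinearMap
    · intro i j a
      have h1 : ((tensor R V (vertexRep R V s R) (vertexRep R V s R)).map a) = 0 :=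
        TensorProduct.ext' fun x y => by
          simp [tensor, vertexRep]
          rfl
      have h2 : ((vertexRep R V s R).map a) = 0 := rfl
      rw [h1, h2]; exact (LinearMap.comp_zero _).trans (LinearMap.zero_comp _).symm
    · apply Hom.ext
      funext v
      exact LinearMap.ext fun x => (e v).symm_apply_apply x
    · apply Hom.ext
      funext v
      exact LinearMap.ext fun x => (e v).apply_symm_apply x
  · -- `U(s) ⊠ P(i)` vanishes vertexwise for `i ≠ s`
    intro i hi v
    by_cases h : v = s
    · haveI : IsEmpty (Quiver.Path i v) := by rw [h]; exact path_to_source_isEmpty hs hi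
      haveI : Subsingleton (Quiver.Path i v →₀ R) := finsupp_subsingleton_of_isEmpty
      exact show Subsingleton (TensorProduct R (PLift (v = s) →₀ R) (Quiver.Path i v →₀ R)) from
        tensor_subsingleton_right
    · haveI : IsEmpty (PLift (v = s)) := ⟨fun p => h p.down⟩
      haveI : Subsingleton (PLift (v = s) →₀ R) := finsupp_subsingleton_of_isEmpty
      exact show Subsingleton (TensorProduct R (PLift (v = s) →₀ R) (Quiver.Path i v →₀ R)) from
        tensor_subsingleton_left
  · -- `Hom(U(s) ⊠ P(i), U) = 0`
    intro i
    have key : ∀ f : tensor R V (vertexRep R V s R) (proj R V i) ⟶ unit R V,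
        ∀ v, f.app v = 0 := by
      intro f v
      by_cases hv : v = s
      · subst hv
        by_cases hi : i = v
        · subst hi
          -- use an arrow going out of the source `s = i`
          obtain ⟨t, ht⟩ := Fintype.exists_ne_of_one_lt_card (by omega) i
          obtain ⟨j, ⟨a⟩⟩ := exists_arrow_out_of_path (t := t) hs
            (hconn (show Quiver.Symmetrify V from i) (show Quiver.Symmetrify V from t)).some ht
          have h0 : (f.app j).comp
              ((tensor R V (vertexRep R V i R) (proj R V i)).map a) = 0 :=
            comp_tmap_zero_left _ _
          exact (LinearMap.id_comp (f.app i)).symm.trans ((f.comm a).symm.trans h0)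
        · haveI : IsEmpty (Quiver.Path i v) := path_to_source_isEmpty hs hi
          haveI : Subsingleton (Quiver.Path i v →₀ R) := finsupp_subsingleton_of_isEmpty
          haveI : Subsingleton ((tensor R V (vertexRep R V v R) (proj R V i)).M v) :=
            show Subsingleton (TensorProduct R (PLift (v = v) →₀ R) (Quiver.Path i v →₀ R)) from
              tensor_subsingleton_right
          exact hom_eq_of_subsingleton _ _
      · haveI : IsEmpty (PLift (v = s)) := ⟨fun p => hv p.down⟩
        haveI : Subsingleton (PLift (v = s) →₀ R) := finsupp_subsingleton_of_isEmpty
        haveI : Subsingleton ((tensor R V (vertexRep R V s R) (proj R V i)).M v) :=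
          show Subsingleton (TensorProduct R (PLift (v = s) →₀ R) (Quiver.Path i v →₀ R)) from
            tensor_subsingleton_left
        exact hom_eq_of_subsingleton _ _
    exact ⟨fun f g => Hom.ext (funext fun v => (key f v).trans (key g v).symm)⟩
  · -- `[U(s), U(s)]` is nonzero
    intro hsub
    let g : ∀ v : V, (Quiver.Path s v →₀ R) →ₗ[R] R :=
      fun v => Finsupp.lsum ℕ fun _ => LinearMap.id
    let bil : ∀ v : V,
        (PLift (v = s) →₀ R) →ₗ[R] (Quiver.Path s v →₀ R) →ₗ[R] (PLift (v = s) →₀ R) :=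
      fun v => LinearMap.mk₂ R (fun x y => g v y • x)
        (fun x x' y => smul_add _ _ _)
        (fun c x y => smul_comm _ _ _)
        (fun x y y' => by rw [map_add, add_smul])
        (fun c x y => by rw [map_smul, smul_eq_mul, mul_smul])
    let F : tensor R V (vertexRep R V s R) (proj R V s) ⟶ vertexRep R V s R :=
      ⟨fun v => TensorProduct.lift (bil v), by
        intro i j a
        apply TensorProduct.ext'
        intro x y
        simp [tensor, vertexRep]
        exact LinearMap.map_zero (TensorProduct.lift (bil j))⟩
    let Z : tensor R V (vertexRep R V s R) (proj R V s) ⟶ vertexRep R V s R :=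
      ⟨fun v => 0, by
        intro i j a
        rw [LinearMap.zero_comp, LinearMap.comp_zero]⟩
    have hFZ : F = Z := Subsingleton.elim F Z
    have := congrArg (fun h : tensor R V (vertexRep R V s R) (proj R V s) ⟶ vertexRep R V s R =>
      h.app s (Finsupp.single (PLift.up rfl) (1 : R) ⊗ₜ[R]
        Finsupp.single Quiver.Path.nil (1 : R))) hFZ
    simp only [F, Z, LinearMap.zero_apply] at this
    erw [TensorProduct.lift.tmul] at this
    have h2 : g s (Finsupp.single Quiver.Path.nil (1 : R)) •
        Finsupp.single (PLift.up (rfl : s = s)) (1 : R) = 0 := this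
    rw [show g s (Finsupp.single Quiver.Path.nil (1 : R)) = 1 from
      by simp [g, Finsupp.lsum_single], one_smul] at h2
    exact one_ne_zero (Finsupp.single_eq_zero.mp h2)
end
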